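/- Let n ≥ 1, let L : Fin n → ℝ and L_r : Fin n → ℝ with L_r i > 0 and L i > 0 for all i, let b > 0, and fix an index j. If for every k ≠ j both L j < L k and (L j - L_r j)/(L_r j) < (L k - L_r k)/(L_r k), then for every k ≠ j one has (L j - (L_r j + b))/(L_r j + b) < (L k - (L_r k + b))/(L_r k + b); i.e., candidate j is strictly ranked first by the biased criterion. -/
import Mathlib


theorem biased_criterion_top1
    (n : ℕ) (hn : 1 ≤ n) (L Lr : Fin n → ℝ)
    (hLr : ∀ i, 0 < Lr i) (hL : ∀ i, 0 < L i)
    (b : ℝ) (hb : 0 < b) (j : Fin n)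
    (h : ∀ k, k ≠ j → L j < L k ∧ (L j - Lr j) / (Lr j) < (L k - Lr k) / (Lr k)) :
    ∀ k, k ≠ j →
      (L j - (Lr j + b)) / (Lr j + b) < (L k - (Lr k + b)) / (Lr k + b) := by
  intro k hk
  obtain ⟨h1, h2⟩ := h k hk
  have hj := hLr j
  have hk' := hLr k
  rw [div_lt_div_iff₀ hj hk'] at h2
  rw [div_lt_div_iff₀ (by linarith) (by linarith)]
  nlinarith
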